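/- For arbitrary real constants a0, a1, a2, the functions f(x,y,u) = (a2*y^2 + a1*y + a0)/(x - y) and h(x,y,u) = (2*a2*x*y + a1*(x+y) + 2*a0)/(x - y)^2 (which do not depend on u) satisfy the symmetry h(x,y,u) = h(y,x,u) and both compatibility identities (E1) and (E2) of a one-field Gibbons–Tsarev system, for all u and all pairwise distinct x, y, z. -/

import Mathlib

/-- Partial derivative of a three-argument function in its first argument. -/
noncomputable def d1 (F : ℝ → ℝ → ℝ → ℝ) (x y u : ℝ) : ℝ := deriv (fun s => F s y u) x
/-- Partial derivative of a three-argument function in its second argument. -/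
noncomputable def d2 (F : ℝ → ℝ → ℝ → ℝ) (x y u : ℝ) : ℝ := deriv (fun s => F x s u) y
/-- Partial derivative of a three-argument function in its third argument. -/
noncomputable def d3 (F : ℝ → ℝ → ℝ → ℝ) (x y u : ℝ) : ℝ := deriv (fun s => F x y s) u

/-- Left-hand side of the first Gibbons–Tsarev compatibility identity (E1). -/
noncomputable def gtE1 (f h : ℝ → ℝ → ℝ → ℝ) (x y z u : ℝ) : ℝ :=
  d3 f y z u - d3 f x z u + d1 f y z u * f x y u - d1 f x z u * f y x u
    + d2 f y z u * f x z u - d2 f x z u * f y z u + (f y z u - f x z u) * h x y u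

/-- Left-hand side of the second Gibbons–Tsarev compatibility identity (E2). -/
noncomputable def gtE2 (f h : ℝ → ℝ → ℝ → ℝ) (x y z u : ℝ) : ℝ :=
  d3 h y z u - d3 h x z u + d1 h y z u * f x y u - d1 h x z u * f y x u
    + d2 h y z u * f x z u - d2 h x z u * f y z u + (h y z u - h x z u) * h x y u

/-- the rational data
`f(x,y,u) = (a₂y² + a₁y + a₀)/(x−y)`, `h(x,y,u) = (2a₂xy + a₁(x+y) + 2a₀)/(x−y)²`
form a one-field Gibbons–Tsarev system: `h` is symmetric and (E1), (E2) hold. -/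

lemma D1f (c : ℝ) {p q : ℝ} (h : p ≠ q) :
    deriv (fun s => c / (s - q)) p = -c / (p - q)^2 := by
  have hd : HasDerivAt (fun s : ℝ => s - q) 1 p := (hasDerivAt_id p).sub_const q
  have := (hasDerivAt_const p c).div hd (sub_ne_zero.mpr h)
  simp only [Pi.div_def] at this
  rw [this.deriv]; ring

lemma D2f (a b c : ℝ) {p q : ℝ} (h : p ≠ q) :
    deriv (fun s => (b * s^2 + c * s + a) / (p - s)) q
      = ((2*b*q + c) * (p - q) + (b*q^2 + c*q + a)) / (p - q)^2 := by
  have h2 : HasDerivAt (fun s : ℝ => s^2) (2*q) q := by simpa using hasDerivAt_pow 2 q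
  have hn : HasDerivAt (fun s : ℝ => b * s^2 + c * s + a) (b*(2*q) + c*1) q :=
    ((h2.const_mul b).add ((hasDerivAt_id q).const_mul c)).add_const a
  have hd : HasDerivAt (fun s : ℝ => p - s) (-1) q := by
    simpa using ((hasDerivAt_id q).const_sub p)
  have := hn.div hd (sub_ne_zero.mpr h)
  simp only [Pi.div_def] at this
  rw [this.deriv]
  field_simp
  ring

lemma D1h (c d : ℝ) {p q : ℝ} (h : p ≠ q) :
    deriv (fun s => (c * s + d) / (s - q)^2) p
      = (c * (p - q) - 2 * (c * p + d)) / (p - q)^3 := by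
  have hn : HasDerivAt (fun s : ℝ => c * s + d) (c*1) p :=
    ((hasDerivAt_id p).const_mul c).add_const d
  have hd : HasDerivAt (fun s : ℝ => (s - q)^2) (2*(p-q)^1*1) p :=
    ((hasDerivAt_id p).sub_const q).pow 2
  have := hn.div hd (pow_ne_zero 2 (sub_ne_zero.mpr h))
  simp only [Pi.div_def] at this
  rw [this.deriv]
  have h0 : p - q ≠ 0 := sub_ne_zero.mpr h
  field_simp

lemma D2h (c d : ℝ) {p q : ℝ} (h : p ≠ q) :
    deriv (fun s => (c * s + d) / (p - s)^2) q
      = (c * (p - q) + 2 * (c * q + d)) / (p - q)^3 := by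
  have hn : HasDerivAt (fun s : ℝ => c * s + d) (c*1) q :=
    ((hasDerivAt_id q).const_mul c).add_const d
  have hd' : HasDerivAt (fun s : ℝ => p - s) (-1) q := by
    simpa using ((hasDerivAt_id q).const_sub p)
  have hd : HasDerivAt (fun s : ℝ => (p - s)^2) (2*(p-q)^1*(-1)) q := hd'.pow 2
  have := hn.div hd (pow_ne_zero 2 (sub_ne_zero.mpr h))
  simp only [Pi.div_def] at this
  rw [this.deriv]
  have h0 : p - q ≠ 0 := sub_ne_zero.mpr h
  field_simp
  ring

theorem stmt_0 (a0 a1 a2 : ℝ) (f h : ℝ → ℝ → ℝ → ℝ)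
    (hf : ∀ x y u : ℝ, f x y u = (a2 * y ^ 2 + a1 * y + a0) / (x - y))
    (hh : ∀ x y u : ℝ, h x y u = (2 * a2 * x * y + a1 * (x + y) + 2 * a0) / (x - y) ^ 2) :
    ∀ (u x y z : ℝ), x ≠ y → x ≠ z → y ≠ z →
      h x y u = h y x u ∧ gtE1 f h x y z u = 0 ∧ gtE2 f h x y z u = 0 := by
  intro u x y z hxy hxz hyz
  have n1 : x - y ≠ 0 := sub_ne_zero.mpr hxy
  have n2 : y - x ≠ 0 := sub_ne_zero.mpr hxy.symm
  have n3 : x - z ≠ 0 := sub_ne_zero.mpr hxz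
  have n4 : y - z ≠ 0 := sub_ne_zero.mpr hyz
  have hd3f : ∀ p q : ℝ, d3 f p q u = 0 := by
    intro p q; unfold d3
    rw [show (fun s => f p q s) = fun _ => (a2 * q ^ 2 + a1 * q + a0) / (p - q) from
      funext fun s => hf p q s, deriv_const]
  have hd3h : ∀ p q : ℝ, d3 h p q u = 0 := by
    intro p q; unfold d3
    rw [show (fun s => h p q s) = fun _ => (2 * a2 * p * q + a1 * (p + q) + 2 * a0) / (p - q) ^ 2
      from funext fun s => hh p q s, deriv_const]
  have hd1f : ∀ p q : ℝ, p ≠ q → d1 f p q u = -(a2 * q ^ 2 + a1 * q + a0) / (p - q) ^ 2 := by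
    intro p q hpq; unfold d1
    rw [show (fun s => f s q u) = fun s => (a2 * q ^ 2 + a1 * q + a0) / (s - q) from
      funext fun s => hf s q u, D1f _ hpq]
  have hd2f : ∀ p q : ℝ, p ≠ q →
      d2 f p q u = ((2*a2*q + a1) * (p - q) + (a2*q^2 + a1*q + a0)) / (p - q) ^ 2 := by
    intro p q hpq; unfold d2
    rw [show (fun s => f p s u) = fun s => (a2 * s ^ 2 + a1 * s + a0) / (p - s) from
      funext fun s => hf p s u, D2f _ _ _ hpq]
  have hd1h : ∀ p q : ℝ, p ≠ q →
      d1 h p q u = ((2*a2*q + a1) * (p - q) - 2 * ((2*a2*q + a1) * p + (a1*q + 2*a0)))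
        / (p - q) ^ 3 := by
    intro p q hpq; unfold d1
    rw [show (fun s => h s q u) = fun s => ((2*a2*q + a1) * s + (a1*q + 2*a0)) / (s - q) ^ 2 from
      funext fun s => by rw [hh]; ring, D1h _ _ hpq]
  have hd2h : ∀ p q : ℝ, p ≠ q →
      d2 h p q u = ((2*a2*p + a1) * (p - q) + 2 * ((2*a2*p + a1) * q + (a1*p + 2*a0)))
        / (p - q) ^ 3 := by
    intro p q hpq; unfold d2
    rw [show (fun s => h p s u) = fun s => ((2*a2*p + a1) * s + (a1*p + 2*a0)) / (p - s) ^ 2 from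
      funext fun s => by rw [hh]; ring, D2h _ _ hpq]
  refine ⟨?_, ?_, ?_⟩
  · rw [hh, hh]; field_simp; ring
  · unfold gtE1
    rw [hd3f, hd3f, hd1f y z hyz, hd1f x z hxz, hd2f y z hyz, hd2f x z hxz,
      hf x y u, hf y x u, hf x z u, hf y z u, hh x y u]
    field_simp
    ring
  · unfold gtE2
    rw [hd3h, hd3h, hd1h y z hyz, hd1h x z hxz, hd2h y z hyz, hd2h x z hxz,
      hf x y u, hf y x u, hf x z u, hf y z u, hh x y u, hh y z u, hh x z u]
    field_simp
    ring
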